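/- There is a universal constant C > 0 with the following property. Let Λ ∈ ℝ^{d×d} be symmetric positive definite with eigenvalues λ₁ ≥ ⋯ ≥ λ_d > 0 and orthonormal eigenvectors v₁, …, v_d, let θ̂ be a unit vector with coordinates ν_i = ⟨v_i, θ̂⟩, let β > 0, and let a = (θ̂ + β Λ^{−1/2} w⋆)/‖θ̂ + β Λ^{−1/2} w⋆‖₂ where w⋆ maximizes w ↦ ‖θ̂ + β Λ^{−1/2} w‖₂ over the unit sphere. Write a = α θ̂ + ξ with ⟨ξ, θ̂⟩ = 0 and a = Σ_i κ_i v_i with κ_i = ⟨v_i, a⟩. If ‖v₁ − θ̂‖₂ ≤ h, then: ν₁ ≥ 1 − h² and |ν_i| ≤ h for all i ≥ 2; α ≥ 1 − C β²/λ_d and ‖ξ‖₂ ≤ C β/√λ_d; and κ₁ ≥ 1 − C(h² + β²/λ_d) while |κ_i| ≤ C(h + β/√λ_d) for all i ≥ 2. -/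

import Mathlib

open Matrix

noncomputable section

/-- Euclidean norm of a vector in `ℝ^d`. -/
def vnorm {d : ℕ} (x : Fin d → ℝ) : ℝ := Real.sqrt (x ⬝ᵥ x)

/-- Projection onto the unit sphere, `x ↦ x / ‖x‖₂`. -/
def sphProj {d : ℕ} (x : Fin d → ℝ) : Fin d → ℝ := (vnorm x)⁻¹ • x

/-- The positive semidefinite square root of a positive semidefinite matrix, as defined in the
older Mathlib (`Matrix.PosSemidef.sqrt`, since removed). -/
def posSemidefSqrt {n : Type*} [Fintype n] [DecidableEq n] {A : Matrix n n ℝ}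
    (hA : A.PosSemidef) : Matrix n n ℝ :=
  (hA.1.eigenvectorUnitary : Matrix n n ℝ) * diagonal ((↑) ∘ (Real.sqrt ·) ∘ hA.1.eigenvalues) *
    (star (hA.1.eigenvectorUnitary : Matrix n n ℝ))

/-- `Λ^{-1/2}`: the inverse of the positive definite square root of `Λ`. -/
def invSqrt {d : ℕ} {M : Matrix (Fin d) (Fin d) ℝ} (hM : M.PosDef) :
    Matrix (Fin d) (Fin d) ℝ := (posSemidefSqrt hM.posSemidef)⁻¹

namespace SpecHelpers

open scoped RealInnerProductSpace

variable {d : ℕ}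

/-- Reinterpret a plain vector as an element of Euclidean space. -/
abbrev toE (x : Fin d → ℝ) : EuclideanSpace ℝ (Fin d) := (WithLp.equiv 2 (Fin d → ℝ)).symm x

lemma toE_add (x y : Fin d → ℝ) : toE (x + y) = toE x + toE y := rfl
lemma toE_sub (x y : Fin d → ℝ) : toE (x - y) = toE x - toE y := rfl
lemma toE_smul (c : ℝ) (x : Fin d → ℝ) : toE (c • x) = c • toE x := rfl

lemma dot_eq_inner (x y : Fin d → ℝ) : x ⬝ᵥ y = ⟪toE x, toE y⟫ := by
  simp [PiLp.inner_apply, dotProduct, RCLike.inner_apply, mul_comm]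

lemma vnorm_eq (x : Fin d → ℝ) : vnorm x = ‖toE x‖ := by
  rw [vnorm, dot_eq_inner, real_inner_self_eq_norm_sq, Real.sqrt_sq (norm_nonneg _)]

lemma inner_unit (x y : EuclideanSpace ℝ (Fin d)) (hx : ‖x‖ = 1) (hy : ‖y‖ = 1) :
    ⟪x, y⟫ = 1 - ‖x - y‖ ^ 2 / 2 := by
  have := norm_sub_sq_real x y
  rw [hx, hy] at this
  linarith

lemma quad_ge (Lmat : Matrix (Fin d) (Fin d) ℝ) (lam : Fin d → ℝ) (v : Fin d → Fin d → ℝ)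
    (heig : ∀ i, Lmat.mulVec (v i) = lam i • v i)
    (horth : ∀ i j, v i ⬝ᵥ v j = if i = j then 1 else 0)
    (lmin : ℝ) (hmin : ∀ i, lmin ≤ lam i) (x : Fin d → ℝ) :
    lmin * (x ⬝ᵥ x) ≤ x ⬝ᵥ Lmat.mulVec x := by
  set V : Matrix (Fin d) (Fin d) ℝ := Matrix.of v with hV
  have hVVt : V * Vᵀ = 1 := by
    ext i j
    simpa [hV, Matrix.mul_apply, Matrix.one_apply, dotProduct] using horth i j
  have hVtV : Vᵀ * V = 1 := mul_eq_one_comm.mp hVVt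
  set y : Fin d → ℝ := V.mulVec x with hy
  have hxy : x ⬝ᵥ x = y ⬝ᵥ y := by
    have : y ⬝ᵥ y = (y ᵥ* V) ⬝ᵥ x := by rw [hy, dotProduct_mulVec]
    rw [this, ← mulVec_transpose, hy, mulVec_mulVec, hVtV, one_mulVec]
  have hLV : Lmat * Vᵀ = Vᵀ * diagonal lam := by
    ext i j
    have h1 : (Lmat * Vᵀ) i j = (Lmat.mulVec (v j)) i := by
      simp [Matrix.mul_apply, Matrix.mulVec, dotProduct, hV]
    rw [h1, heig j, Matrix.mul_diagonal]
    simp [hV, mul_comm]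
  have hLdec : Lmat = Vᵀ * diagonal lam * V := by
    calc Lmat = Lmat * (Vᵀ * V) := by rw [hVtV, mul_one]
    _ = (Lmat * Vᵀ) * V := by rw [mul_assoc]
    _ = Vᵀ * diagonal lam * V := by rw [hLV]
  have hquad : x ⬝ᵥ Lmat.mulVec x = y ⬝ᵥ (diagonal lam).mulVec y := by
    rw [hLdec, ← mulVec_mulVec, ← mulVec_mulVec, dotProduct_mulVec, ← mulVec_transpose,
      transpose_transpose, hy]
  rw [hquad, hxy]
  have h2 : y ⬝ᵥ (diagonal lam).mulVec y = ∑ i, lam i * (y i * y i) := by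
    simp only [dotProduct, mulVec_diagonal]
    exact Finset.sum_congr rfl fun i _ => by ring
  rw [h2]
  have h3 : lmin * (y ⬝ᵥ y) = ∑ i, lmin * (y i * y i) := by
    simp [dotProduct, Finset.mul_sum]
  rw [h3]
  exact Finset.sum_le_sum fun i _ =>
    mul_le_mul_of_nonneg_right (hmin i) (mul_self_nonneg _)

lemma lam_pos {Lmat : Matrix (Fin d) (Fin d) ℝ} (hL : Lmat.PosDef)
    {lam : Fin d → ℝ} {v : Fin d → Fin d → ℝ}
    (heig : ∀ i, Lmat.mulVec (v i) = lam i • v i)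
    (horth : ∀ i j, v i ⬝ᵥ v j = if i = j then 1 else 0) (i : Fin d) : 0 < lam i := by
  have hvne : v i ≠ 0 := by
    intro h
    have := horth i i
    rw [h] at this
    simpa [dotProduct] using this
  have hpos := hL.dotProduct_mulVec_pos hvne
  rw [heig i] at hpos
  have : (star (v i)) ⬝ᵥ (lam i • v i) = lam i := by
    have hsii := horth i i
    simp only [if_pos rfl] at hsii
    simp [dotProduct_smul, star_trivial, hsii]
  rwa [this] at hpos

lemma invSqrt_bound {Lmat : Matrix (Fin d) (Fin d) ℝ} (hL : Lmat.PosDef)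
    {lam : Fin d → ℝ} {v : Fin d → Fin d → ℝ}
    (heig : ∀ i, Lmat.mulVec (v i) = lam i • v i)
    (horth : ∀ i j, v i ⬝ᵥ v j = if i = j then 1 else 0)
    (lmin : ℝ) (hminpos : 0 < lmin) (hmin : ∀ i, lmin ≤ lam i)
    (w : Fin d → ℝ) (hw : vnorm w = 1) :
    ((invSqrt hL).mulVec w) ⬝ᵥ ((invSqrt hL).mulVec w) ≤ 1 / lmin := by
  set S := posSemidefSqrt hL.posSemidef with hS
  have hSsym : Sᵀ = S := by
    simp [hS, posSemidefSqrt, transpose_mul, Matrix.star_eq_conjTranspose, mul_assoc]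
  have hSS : S * S = Lmat := by
    have hU : (star (hL.posSemidef.1.eigenvectorUnitary : Matrix (Fin d) (Fin d) ℝ)) *
        (hL.posSemidef.1.eigenvectorUnitary : Matrix (Fin d) (Fin d) ℝ) = 1 :=
      Unitary.coe_star_mul_self _
    have hD : diagonal (((↑) ∘ (Real.sqrt ·) ∘ hL.posSemidef.1.eigenvalues : Fin d → ℝ)) *
        diagonal (((↑) ∘ (Real.sqrt ·) ∘ hL.posSemidef.1.eigenvalues : Fin d → ℝ)) =
        diagonal ((RCLike.ofReal ∘ hL.posSemidef.1.eigenvalues : Fin d → ℝ)) := by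
      rw [diagonal_mul_diagonal]
      congr 1; funext i
      simp [Real.mul_self_sqrt (hL.posSemidef.eigenvalues_nonneg i)]
    conv_rhs => rw [hL.posSemidef.1.spectral_theorem, Unitary.conjStarAlgAut_apply]
    rw [hS, posSemidefSqrt]
    calc _ = (hL.posSemidef.1.eigenvectorUnitary : Matrix (Fin d) (Fin d) ℝ) *
          diagonal ((↑) ∘ (Real.sqrt ·) ∘ hL.posSemidef.1.eigenvalues) *
          ((star (hL.posSemidef.1.eigenvectorUnitary : Matrix (Fin d) (Fin d) ℝ)) *
          (hL.posSemidef.1.eigenvectorUnitary : Matrix (Fin d) (Fin d) ℝ)) *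
          diagonal ((↑) ∘ (Real.sqrt ·) ∘ hL.posSemidef.1.eigenvalues) *
          (star (hL.posSemidef.1.eigenvectorUnitary : Matrix (Fin d) (Fin d) ℝ)) := by
            simp only [mul_assoc]
      _ = _ := by rw [hU, mul_one, mul_assoc _ (diagonal _) (diagonal _), hD]
  have hdet : IsUnit S.det := by
    have h2 : S.det * S.det = Lmat.det := by rw [← det_mul, hSS]
    have : Lmat.det ≠ 0 := ne_of_gt hL.det_pos
    exact isUnit_iff_ne_zero.mpr (fun h => this (by rw [← h2, h, mul_zero]))
  have hinv : S * S⁻¹ = 1 := mul_nonsing_inv S hdet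
  set m : Fin d → ℝ := (invSqrt hL).mulVec w with hm
  have hSm : S.mulVec m = w := by
    rw [hm, invSqrt, ← hS, mulVec_mulVec, hinv, one_mulVec]
  have hww : w ⬝ᵥ w = 1 := by
    have h0 : (0:ℝ) ≤ w ⬝ᵥ w := by
      simpa [dotProduct] using Finset.sum_nonneg fun i (_ : i ∈ Finset.univ) =>
        mul_self_nonneg (w i)
    have hw' := hw
    rw [vnorm] at hw'
    nlinarith [Real.sq_sqrt h0, hw']
  have hquad : m ⬝ᵥ Lmat.mulVec m = 1 := by
    rw [← hSS, ← mulVec_mulVec, dotProduct_mulVec, ← mulVec_transpose, hSsym, hSm, hww]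
  have hq := quad_ge Lmat lam v heig horth lmin hmin m
  rw [hquad] at hq
  rw [le_div_iff₀ hminpos, mul_comm]
  exact hq

lemma r1 {q h : ℝ} (h0 : 0 ≤ q) (hq : q ≤ h) : 1 - h ^ 2 ≤ 1 - q ^ 2 / 2 := by nlinarith

lemma r3 {q ε : ℝ} (h0 : 0 ≤ q) (hq : q ≤ 2 * ε) : 1 - 4 * ε ^ 2 ≤ 1 - q ^ 2 / 2 := by nlinarith

lemma rlow {q ε : ℝ} (h0 : 0 ≤ q) (hq : q ≤ 2 * ε) : 1 - (1 - q ^ 2 / 2) ≤ 2 * ε ^ 2 := by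
  nlinarith

lemma rxi {q α ε : ℝ} (h0 : 0 ≤ q) (he : 0 ≤ ε) (hsq : q ^ 2 = 1 - α ^ 2) (hα1 : α ≤ 1)
    (hlow : 1 - α ≤ 2 * ε ^ 2) : q ≤ 2 * ε := by
  nlinarith [sq_nonneg q, sq_nonneg (q - 2 * ε), sq_nonneg (q + 2 * ε)]

lemma r5 {q h ε : ℝ} (h0 : 0 ≤ q) (hh : 0 ≤ h) (he : 0 ≤ ε) (hq : q ≤ h + 2 * ε) :
    1 - (4 * h ^ 2 + 4 * ε ^ 2) ≤ 1 - q ^ 2 / 2 := by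
  nlinarith [sq_nonneg (h - 2 * ε), sq_nonneg (h + 2 * ε)]

end SpecHelpers

open SpecHelpers
open scoped RealInnerProductSpace


/-- **Lemma (spectral decomposition of the LinUCB action).**
With `a = P(θ̂ + β Λ^{-1/2} w⋆)`, `a = α θ̂ + ξ` the orthogonal decomposition along `θ̂`,
and `κ_i = ⟨v_i, a⟩`: if `‖v₁ − θ̂‖₂ ≤ h`, then `ν₁ ≥ 1 − h²`, `|ν_i| ≤ h` (`i ≥ 2`),
`α ≥ 1 − Cβ²/λ_d`, `‖ξ‖₂ ≤ Cβ/√λ_d`, `κ₁ ≥ 1 − C(h² + β²/λ_d)` and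
`|κ_i| ≤ C(h + β/√λ_d)` (`i ≥ 2`), for a universal constant `C`. -/
theorem spectral_decomposition_of_action :
    ∃ C : ℝ, 0 < C ∧
      ∀ (d : ℕ) (hd : 1 ≤ d)
        (Lmat : Matrix (Fin d) (Fin d) ℝ) (hL : Lmat.PosDef)
        (lam : Fin d → ℝ) (v : Fin d → Fin d → ℝ),
        (∀ i, Lmat.mulVec (v i) = lam i • v i) →
        (∀ i j, v i ⬝ᵥ v j = if i = j then 1 else 0) →
        (∀ i j, i ≤ j → lam j ≤ lam i) →
      ∀ (θhat : Fin d → ℝ), vnorm θhat = 1 →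
      ∀ (β : ℝ), 0 < β →
      ∀ (wstar : Fin d → ℝ), vnorm wstar = 1 →
        (∀ w : Fin d → ℝ, vnorm w = 1 →
          vnorm (θhat + β • (invSqrt hL).mulVec w) ≤
            vnorm (θhat + β • (invSqrt hL).mulVec wstar)) →
      ∀ h : ℝ, vnorm (v ⟨0, by omega⟩ - θhat) ≤ h →
        (1 - h^2 ≤ v ⟨0, by omega⟩ ⬝ᵥ θhat) ∧
        (∀ i : Fin d, i ≠ ⟨0, by omega⟩ → |v i ⬝ᵥ θhat| ≤ h) ∧
        (1 - C * β^2 / lam ⟨d - 1, by omega⟩ ≤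
          sphProj (θhat + β • (invSqrt hL).mulVec wstar) ⬝ᵥ θhat) ∧
        (vnorm (sphProj (θhat + β • (invSqrt hL).mulVec wstar) -
            (sphProj (θhat + β • (invSqrt hL).mulVec wstar) ⬝ᵥ θhat) • θhat) ≤
          C * β / Real.sqrt (lam ⟨d - 1, by omega⟩)) ∧
        (1 - C * (h^2 + β^2 / lam ⟨d - 1, by omega⟩) ≤
          v ⟨0, by omega⟩ ⬝ᵥ sphProj (θhat + β • (invSqrt hL).mulVec wstar)) ∧
        (∀ i : Fin d, i ≠ ⟨0, by omega⟩ →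
          |v i ⬝ᵥ sphProj (θhat + β • (invSqrt hL).mulVec wstar)| ≤
            C * (h + β / Real.sqrt (lam ⟨d - 1, by omega⟩))) := by
  refine ⟨4, by norm_num, ?_⟩
  intro d hd Lmat hL lam v heig horth hmono θhat hθ β hβ wstar hwstar hmax h hh
  have i0 : Fin d := ⟨0, by omega⟩
  set idm : Fin d := ⟨d - 1, by omega⟩ with hidm
  set lmin : ℝ := lam idm with hlmin
  have hminpos : 0 < lmin := lam_pos hL heig horth idm
  have hmin : ∀ i, lmin ≤ lam i := by
    intro i
    refine hmono i idm ?_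
    rw [Fin.le_def]
    have := i.isLt
    simp only [hidm]
    omega
  -- abbreviations
  set m : Fin d → ℝ := (invSqrt hL).mulVec wstar with hm
  have hm2 : m ⬝ᵥ m ≤ 1 / lmin :=
    invSqrt_bound hL heig horth lmin hminpos hmin wstar hwstar
  -- Euclidean space picture
  set θ : EuclideanSpace ℝ (Fin d) := toE θhat with hθdef
  set t : EuclideanSpace ℝ (Fin d) := toE (β • m) with htdef
  set u : EuclideanSpace ℝ (Fin d) := θ + t with hudef
  have hUE : toE (θhat + β • m) = u := by
    rw [hudef, hθdef, htdef, toE_add]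
  set n : ℝ := ‖u‖ with hn
  have hN : vnorm (θhat + β • m) = n := by rw [vnorm_eq, hUE]
  set a : EuclideanSpace ℝ (Fin d) := n⁻¹ • u with hadef
  have hA : toE (sphProj (θhat + β • m)) = a := by
    rw [sphProj, toE_smul, hUE, hN, hadef]
  have hθn : ‖θ‖ = 1 := by rw [hθdef, ← vnorm_eq, hθ]
  have hsq : 0 < Real.sqrt lmin := Real.sqrt_pos.mpr hminpos
  set ε : ℝ := β / Real.sqrt lmin with hε
  have hε0 : 0 < ε := div_pos hβ hsq
  have hε2 : ε ^ 2 = β ^ 2 / lmin := by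
    rw [hε, div_pow, Real.sq_sqrt hminpos.le]
  have ht : ‖t‖ ≤ ε := by
    have h1 : ‖t‖ = β * vnorm m := by
      rw [htdef, toE_smul, norm_smul, Real.norm_eq_abs, abs_of_pos hβ, vnorm_eq]
    have h2 : vnorm m ≤ 1 / Real.sqrt lmin := by
      rw [vnorm]
      calc Real.sqrt (m ⬝ᵥ m) ≤ Real.sqrt (1 / lmin) := Real.sqrt_le_sqrt hm2
      _ = 1 / Real.sqrt lmin := by rw [one_div, Real.sqrt_inv, one_div]
    rw [h1, hε]
    calc β * vnorm m ≤ β * (1 / Real.sqrt lmin) := by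
          exact mul_le_mul_of_nonneg_left h2 hβ.le
    _ = β / Real.sqrt lmin := by ring
  have hn2 : n ≤ 1 + ‖t‖ := by
    rw [hn, hudef]
    calc ‖θ + t‖ ≤ ‖θ‖ + ‖t‖ := norm_add_le _ _
    _ = 1 + ‖t‖ := by rw [hθn]
  have hn1 : 1 ≤ n := by
    have hwneg : vnorm (-wstar) = 1 := by
      rw [vnorm]; rw [vnorm] at hwstar
      simpa [dotProduct, neg_mul_neg] using hwstar
    have hmax' := hmax (-wstar) hwneg
    have hrw : θhat + β • (invSqrt hL).mulVec (-wstar) = θhat - β • m := by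
      rw [hm, mulVec_neg, smul_neg, sub_eq_add_neg]
    rw [hrw, hN] at hmax'
    have hsub : vnorm (θhat - β • m) = ‖θ - t‖ := by
      rw [vnorm_eq, toE_sub, ← hθdef, ← htdef]
    rw [hsub] at hmax'
    have h2 : (2:ℝ) = ‖(θ + t) + (θ - t)‖ := by
      have : (θ + t) + (θ - t) = (2:ℝ) • θ := by
        rw [two_smul]; abel
      rw [this, norm_smul, hθn]
      norm_num
    have h3 : ‖(θ + t) + (θ - t)‖ ≤ ‖θ + t‖ + ‖θ - t‖ := norm_add_le _ _
    rw [hn, hudef]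
    linarith
  have hn0 : 0 < n := lt_of_lt_of_le one_pos hn1
  have han : ‖a‖ = 1 := by
    rw [hadef, norm_smul, Real.norm_eq_abs, abs_of_pos (inv_pos.mpr hn0), ← hn,
      inv_mul_cancel₀ hn0.ne']
  have hinvn : n⁻¹ * n = 1 := inv_mul_cancel₀ hn0.ne'
  have hinvle : n⁻¹ ≤ 1 := inv_le_one_of_one_le₀ hn1
  have hathm : ‖a - θ‖ ≤ 2 * ε := by
    have hkey : a - θ = (n⁻¹ - 1) • θ + n⁻¹ • t := by
      rw [hadef, hudef, smul_add, sub_smul, one_smul]; abel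
    have h1 : ‖a - θ‖ ≤ |n⁻¹ - 1| + |n⁻¹| * ‖t‖ := by
      rw [hkey]
      calc ‖(n⁻¹ - 1) • θ + n⁻¹ • t‖ ≤ ‖(n⁻¹ - 1) • θ‖ + ‖n⁻¹ • t‖ := norm_add_le _ _
      _ = |n⁻¹ - 1| + |n⁻¹| * ‖t‖ := by
          rw [norm_smul, norm_smul, Real.norm_eq_abs, Real.norm_eq_abs, hθn, mul_one]
    have h2 : |n⁻¹ - 1| ≤ ‖t‖ := by
      rw [abs_sub_comm, abs_of_nonneg (by linarith)]
      have e1 : 1 - n⁻¹ = (n - 1) * n⁻¹ := by field_simp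
      have e2 : (n - 1) * n⁻¹ ≤ (n - 1) * 1 :=
        mul_le_mul_of_nonneg_left hinvle (by linarith)
      rw [e1]
      linarith
    have h3 : |n⁻¹| * ‖t‖ ≤ ‖t‖ := by
      rw [abs_of_pos (inv_pos.mpr hn0)]
      exact mul_le_of_le_one_left (norm_nonneg t) hinvle
    linarith
  -- basic facts about eigenvectors in Euclidean space
  have hvE : ∀ i : Fin d, ‖toE (v i)‖ = 1 := by
    intro i
    rw [← vnorm_eq, vnorm]
    have h1 : v i ⬝ᵥ v i = 1 := by simpa using horth i i
    rw [h1, Real.sqrt_one]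
  have hhE : ‖toE (v ⟨0, by omega⟩) - θ‖ ≤ h := by
    rw [hθdef, ← toE_sub, ← vnorm_eq]
    exact hh
  have hh0 : (0:ℝ) ≤ h := le_trans (norm_nonneg _) hhE
  clear_value m θ t u n a ε
  refine ⟨?_, ?_, ?_, ?_, ?_, ?_⟩
  · -- ν₁ ≥ 1 - h²
    rw [dot_eq_inner, ← hθdef, inner_unit _ _ (hvE _) hθn]
    exact r1 (norm_nonneg _) hhE
  · -- |ν_i| ≤ h
    intro i hi
    have hsplit : v i ⬝ᵥ θhat = v i ⬝ᵥ (θhat - v ⟨0, by omega⟩) + v i ⬝ᵥ v ⟨0, by omega⟩ := by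
      rw [← dotProduct_add]; congr 1; abel
    have hz : v i ⬝ᵥ v ⟨0, by omega⟩ = 0 := by
      rw [horth]; simp [hi]
    rw [hsplit, hz, add_zero, dot_eq_inner]
    calc |⟪toE (v i), toE (θhat - v ⟨0, by omega⟩)⟫| ≤
        ‖toE (v i)‖ * ‖toE (θhat - v ⟨0, by omega⟩)‖ := abs_real_inner_le_norm _ _
    _ ≤ h := by
        rw [hvE i, one_mul, toE_sub, ← hθdef, ← norm_neg]
        simpa [neg_sub] using hhE
  · -- α ≥ 1 - Cβ²/λ_d
    rw [dot_eq_inner, hA, ← hθdef, inner_unit _ _ han hθn]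
    have e : (4:ℝ) * β ^ 2 / lmin = 4 * ε ^ 2 := by rw [hε2]; ring
    rw [e]
    exact r3 (norm_nonneg _) hathm
  · -- ‖ξ‖ ≤ Cβ/√λ_d
    rw [vnorm_eq, toE_sub, toE_smul, dot_eq_inner, hA, ← hθdef]
    have hα1 : ⟪a, θ⟫ ≤ 1 := by
      have h5 := real_inner_le_norm a θ
      rw [han, hθn] at h5; simpa using h5
    have hαlow : 1 - ⟪a, θ⟫ ≤ 2 * ε ^ 2 := by
      rw [inner_unit _ _ han hθn]
      exact rlow (norm_nonneg _) hathm
    have hξsq : ‖a - ⟪a, θ⟫ • θ‖ ^ 2 = 1 - ⟪a, θ⟫ ^ 2 := by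
      rw [norm_sub_sq_real, real_inner_smul_right, norm_smul, Real.norm_eq_abs, hθn, han]
      ring_nf
      rw [sq_abs]
      ring
    have hξ : ‖a - ⟪a, θ⟫ • θ‖ ≤ 2 * ε := rxi (norm_nonneg _) hε0.le hξsq hα1 hαlow
    have e4 : (4:ℝ) * β / Real.sqrt lmin = 4 * ε := by rw [hε]; ring
    rw [e4]
    linarith
  · -- κ₁ ≥ 1 - C(h² + β²/λ_d)
    rw [dot_eq_inner, hA, inner_unit _ _ (hvE _) han]
    have htri : ‖toE (v ⟨0, by omega⟩) - a‖ ≤ h + 2 * ε := by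
      calc ‖toE (v ⟨0, by omega⟩) - a‖ ≤ ‖toE (v ⟨0, by omega⟩) - θ‖ + ‖θ - a‖ := by
            have : toE (v ⟨0, by omega⟩) - a = (toE (v ⟨0, by omega⟩) - θ) + (θ - a) := by abel
            rw [this]; exact norm_add_le _ _
      _ ≤ h + 2 * ε := by
            rw [← norm_neg (θ - a), neg_sub]
            linarith [hhE, hathm]
    have hrw : (4:ℝ) * (h ^ 2 + β ^ 2 / lmin) = 4 * h ^ 2 + 4 * ε ^ 2 := by rw [hε2]; ring
    rw [hrw]
    exact r5 (norm_nonneg _) hh0 hε0.le htri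
  · -- |κ_i| ≤ C(h + β/√λ_d)
    intro i hi
    have hsplit : v i ⬝ᵥ sphProj (θhat + β • m) =
        v i ⬝ᵥ (sphProj (θhat + β • m) - v ⟨0, by omega⟩) + v i ⬝ᵥ v ⟨0, by omega⟩ := by
      rw [← dotProduct_add]; congr 1; abel
    have hz : v i ⬝ᵥ v ⟨0, by omega⟩ = 0 := by
      rw [horth]; simp [hi]
    rw [hsplit, hz, add_zero, dot_eq_inner, toE_sub, hA]
    have hbound : ‖a - toE (v ⟨0, by omega⟩)‖ ≤ h + 2 * ε := by
      calc ‖a - toE (v ⟨0, by omega⟩)‖ ≤ ‖a - θ‖ + ‖θ - toE (v ⟨0, by omega⟩)‖ := by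
            have : a - toE (v ⟨0, by omega⟩) = (a - θ) + (θ - toE (v ⟨0, by omega⟩)) := by abel
            rw [this]; exact norm_add_le _ _
      _ ≤ h + 2 * ε := by
            rw [← norm_neg (θ - toE (v ⟨0, by omega⟩)), neg_sub]
            linarith [hhE, hathm]
    have hfin : |⟪toE (v i), a - toE (v ⟨0, by omega⟩)⟫| ≤ h + 2 * ε := by
      calc |⟪toE (v i), a - toE (v ⟨0, by omega⟩)⟫| ≤
          ‖toE (v i)‖ * ‖a - toE (v ⟨0, by omega⟩)‖ := abs_real_inner_le_norm _ _
      _ ≤ h + 2 * ε := by rw [hvE i, one_mul]; exact hbound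
    have hlink : h + 2 * ε ≤ 4 * (h + β / Real.sqrt lmin) := by
      rw [← hε]; linarith
    linarith


end
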